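/- If C and D are updown categories, then their product C × D, with object set Ob(C) × Ob(D), Hom((c,d),(c',d')) = Hom(c,c') × Hom(d,d'), and rank |(c,d)| = |c| + |d|, is an updown category. -/

import Mathlib

structure UDData where
  Obj : Type
  Hom : Obj → Obj → Type
  idm : ∀ p, Hom p p
  comp : ∀ {p q r : Obj}, Hom p q → Hom q r → Hom p r
  idm_comp : ∀ {p q : Obj} (f : Hom p q), comp (idm p) f = f
  comp_idm : ∀ {p q : Obj} (f : Hom p q), comp f (idm q) = f
  comp_assoc : ∀ {p q r s : Obj} (f : Hom p q) (g : Hom q r) (h : Hom r s),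
    comp (comp f g) h = comp f (comp g h)
  rank : Obj → ℕ
  zhat : Obj

namespace UDData

def cast {C : UDData} {p q q' : C.Obj} (h : q = q') (f : C.Hom p q) : C.Hom p q' := h ▸ f

def Chain (C : UDData) : ℕ → C.Obj → C.Obj → Type
  | 0, p, q => PLift (p = q)
  | n + 1, p, q => (r : C.Obj) × C.Chain n p r × {f : C.Hom r q // C.rank q = C.rank r + 1}

structure IsUpdown (C : UDData) : Prop where
  rank_finite : ∀ n : ℕ, {p : C.Obj | C.rank p = n}.Finite
  hom_finite : ∀ p q : C.Obj, Finite (C.Hom p q)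
  rank_zhat : C.rank C.zhat = 0
  zhat_unique : ∀ p : C.Obj, C.rank p = 0 → p = C.zhat
  from_zhat : ∀ p : C.Obj, Nonempty (C.Hom C.zhat p)
  hom_rank : ∀ p q : C.Obj, Nonempty (C.Hom p q) → C.rank p < C.rank q ∨ p = q
  aut_inv : ∀ (p : C.Obj) (f : C.Hom p p),
    ∃ g : C.Hom p p, C.comp f g = C.idm p ∧ C.comp g f = C.idm p
  factor : ∀ {p q : C.Obj} (f : C.Hom p q), C.rank p < C.rank q →
    ∃ (r : C.Obj) (g : C.Hom p r) (h : C.Hom r q),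
      C.rank r = C.rank p + 1 ∧ C.comp g h = f
  pre_free : ∀ {p q : C.Obj}, C.rank q = C.rank p + 1 → ∀ (a : C.Hom p p) (f : C.Hom p q),
    C.comp a f = f → a = C.idm p
  post_free : ∀ {p q : C.Obj}, C.rank q = C.rank p + 1 → ∀ (b : C.Hom q q) (f : C.Hom p q),
    C.comp f b = f → b = C.idm q

variable (C : UDData)

noncomputable def nAut (p : C.Obj) : ℕ := Nat.card (C.Hom p p)

noncomputable def u (p q : C.Obj) : ℕ := Nat.card (C.Hom p q) / C.nAut q

noncomputable def d (p q : C.Obj) : ℕ := Nat.card (C.Hom p q) / C.nAut p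

noncomputable def uStep (p q : C.Obj) : ℕ := if C.rank q = C.rank p + 1 then C.u p q else 0

noncomputable def dStep (p q : C.Obj) : ℕ := if C.rank q = C.rank p + 1 then C.d p q else 0

open Classical in
noncomputable def uext (C : UDData) : ℕ → C.Obj → C.Obj → ℕ
  | 0, p, q => if p = q then 1 else 0
  | n + 1, p, q => ∑ᶠ r : C.Obj, C.uext n p r * C.uStep r q

open Classical in
noncomputable def dext (C : UDData) : ℕ → C.Obj → C.Obj → ℕ
  | 0, p, q => if p = q then 1 else 0
  | n + 1, p, q => ∑ᶠ r : C.Obj, C.dext n p r * C.dStep r q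

noncomputable def uE (p q : C.Obj) : ℕ := C.uext (C.rank q - C.rank p) p q

noncomputable def dE (p q : C.Obj) : ℕ := C.dext (C.rank q - C.rank p) p q

def Univalent (C : UDData) : Prop := ∀ p : C.Obj, Subsingleton (C.Hom p p)

def Simple (C : UDData) : Prop :=
  (∀ p q : C.Obj, Subsingleton (C.Hom p q)) ∧
    ∀ (n : ℕ) (p q : C.Obj), Subsingleton (C.Chain n p q)

def EUC (C : UDData) (u : ℕ → ℕ) : Prop :=
  ∀ p : C.Obj, (∑ᶠ q : C.Obj, C.uStep p q) = u (C.rank p)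

def EDC (C : UDData) (d : ℕ → ℕ) : Prop :=
  ∀ p : C.Obj, (∑ᶠ q : C.Obj, C.dStep q p) = d (C.rank p)

def Factorial (C : UDData) : Prop :=
  ∀ p : C.Obj, (∑ᶠ q : C.Obj, C.dStep q p) = C.rank p

def prod (C D : UDData) : UDData where
  Obj := C.Obj × D.Obj
  Hom := fun p q => C.Hom p.1 q.1 × D.Hom p.2 q.2
  idm := fun p => (C.idm p.1, D.idm p.2)
  comp := fun f g => (C.comp f.1 g.1, D.comp f.2 g.2)
  idm_comp := by intro p q f; cases f; simp [C.idm_comp, D.idm_comp]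
  comp_idm := by intro p q f; cases f; simp [C.comp_idm, D.comp_idm]
  comp_assoc := by intro p q r s f g h; simp [C.comp_assoc, D.comp_assoc]
  rank := fun p => C.rank p.1 + D.rank p.2
  zhat := (C.zhat, D.zhat)

structure Mor (C D : UDData) where
  obj : C.Obj → D.Obj
  map : ∀ {p q : C.Obj}, C.Hom p q → D.Hom (obj p) (obj q)
  map_idm : ∀ p : C.Obj, map (C.idm p) = D.idm (obj p)
  map_comp : ∀ {p q r : C.Obj} (f : C.Hom p q) (g : C.Hom q r),
    map (C.comp f g) = D.comp (map f) (map g)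
  rank_eq : ∀ p : C.Obj, D.rank (obj p) = C.rank p

def Mor.comp {C D E : UDData} (F : Mor C D) (G : Mor D E) : Mor C E where
  obj := fun p => G.obj (F.obj p)
  map := fun f => G.map (F.map f)
  map_idm := by intro p; show G.map (F.map (C.idm p)) = _; rw [F.map_idm, G.map_idm]
  map_comp := by
    intro p q r f g
    show G.map (F.map (C.comp f g)) = E.comp (G.map (F.map f)) (G.map (F.map g))
    rw [F.map_comp, G.map_comp]
  rank_eq := by intro p; rw [G.rank_eq, F.rank_eq]

structure Mor.IsGood {C D : UDData} (F : Mor C D) : Prop where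
  aut_inj : ∀ p : C.Obj, Function.Injective fun a : C.Hom p p => F.map a
  pre_quot_inj : ∀ {p q₁ q₂ : C.Obj} (f₁ : C.Hom p q₁) (f₂ : C.Hom p q₂),
    C.rank q₁ = C.rank p + 1 → C.rank q₂ = C.rank p + 1 →
    ∀ h : F.obj q₁ = F.obj q₂,
      (∃ a : D.Hom (F.obj p) (F.obj p),
        D.comp a (UDData.cast h (F.map f₁)) = F.map f₂) →
      ∃ e : q₁ = q₂, ∃ a : C.Hom p p, C.comp a (UDData.cast e f₁) = f₂
  post_quot_inj : ∀ {p q₁ q₂ : C.Obj} (f₁ : C.Hom p q₁) (f₂ : C.Hom p q₂),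
    C.rank q₁ = C.rank p + 1 → C.rank q₂ = C.rank p + 1 →
    ∀ h : F.obj q₁ = F.obj q₂,
      (∃ b : D.Hom (F.obj q₂) (F.obj q₂),
        D.comp (UDData.cast h (F.map f₁)) b = F.map f₂) →
      ∃ e : q₁ = q₂, ∃ b : C.Hom q₂ q₂, C.comp (UDData.cast e f₁) b = f₂

def Mor.IsCovering {C' C : UDData} (F : Mor C' C) : Prop :=
  Function.Surjective F.obj ∧
    ∀ p q : C'.Obj, C'.rank q = C'.rank p + 1 →
      Function.Bijective fun x : (q' : {q' : C'.Obj // F.obj q' = F.obj q}) × C'.Hom p q'.1 =>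
        UDData.cast x.1.2 (F.map x.2)

noncomputable def objCoeff (n : ℕ) : ℚ :=
  ∑ᶠ p : C.Obj, if C.rank p = n then ((C.nAut p : ℚ))⁻¹ else 0

noncomputable def objGF : PowerSeries ℚ := PowerSeries.mk C.objCoeff

noncomputable def morGF : PowerSeries ℚ :=
  PowerSeries.mk fun n =>
    ∑ᶠ p : C.Obj, ∑ᶠ q : C.Obj,
      if C.rank p + C.rank q = n then (C.uStep p q : ℚ) * ((C.nAut p : ℚ))⁻¹ else 0

noncomputable def sqSub (f : PowerSeries ℚ) : PowerSeries ℚ :=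
  PowerSeries.mk fun n => if 2 ∣ n then PowerSeries.coeff (R := ℚ) (n / 2) f else 0

noncomputable def coverCard (n : ℕ) : ℕ := Nat.card ((q : C.Obj) × C.Chain n C.zhat q)

noncomputable def inprod (f g : C.Obj → ℚ) : ℚ := ∑ᶠ p : C.Obj, f p * g p * C.nAut p

noncomputable def Uop (f : C.Obj → ℚ) : C.Obj → ℚ := fun q => ∑ᶠ p : C.Obj, f p * C.uStep p q

noncomputable def Dop (f : C.Obj → ℚ) : C.Obj → ℚ := fun p => ∑ᶠ q : C.Obj, f q * C.dStep p q

end UDData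

namespace UDData

lemma aut_left_cancel (C : UDData) (hC : C.IsUpdown) {p : C.Obj} (a f : C.Hom p p)
    (h : C.comp a f = f) : a = C.idm p := by
  obtain ⟨g, hg1, _⟩ := hC.aut_inv p f
  calc a = C.comp a (C.comp f g) := by rw [hg1, C.comp_idm]
    _ = C.comp (C.comp a f) g := (C.comp_assoc ..).symm
    _ = C.idm p := by rw [h, hg1]

lemma aut_right_cancel (C : UDData) (hC : C.IsUpdown) {p : C.Obj} (b f : C.Hom p p)
    (h : C.comp f b = f) : b = C.idm p := by
  obtain ⟨g, hg1, hg2⟩ := hC.aut_inv p f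
  calc b = C.comp (C.comp g f) b := by rw [hg2, C.idm_comp]
    _ = C.comp g (C.comp f b) := C.comp_assoc ..
    _ = C.idm p := by rw [h, hg2]

lemma rank_le_finite (C : UDData) (hC : C.IsUpdown) (n : ℕ) :
    {a : C.Obj | C.rank a ≤ n}.Finite := by
  have : {a : C.Obj | C.rank a ≤ n} = ⋃ k ∈ Finset.range (n+1), {a | C.rank a = k} := by
    ext a; simp [Nat.lt_succ_iff]
  rw [this]
  exact Set.Finite.biUnion (Finset.range (n+1)).finite_toSet (fun k _ => hC.rank_finite k)

end UDData

theorem updown_prod_isUpdown (C D : UDData) (hC : C.IsUpdown) (hD : D.IsUpdown) :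
    (C.prod D).IsUpdown := by
  constructor
  · -- rank_finite
    intro n
    apply Set.Finite.subset ((C.rank_le_finite hC n).prod (D.rank_le_finite hD n))
    rintro ⟨p1, p2⟩ hp
    simp only [UDData.prod, Set.mem_setOf_eq] at hp
    exact ⟨by simp; omega, by simp; omega⟩
  · -- hom_finite
    rintro ⟨p1, p2⟩ ⟨q1, q2⟩
    haveI := hC.hom_finite p1 q1
    haveI := hD.hom_finite p2 q2
    show Finite (C.Hom p1 q1 × D.Hom p2 q2)
    infer_instance
  · -- rank_zhat
    show C.rank C.zhat + D.rank D.zhat = 0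
    rw [hC.rank_zhat, hD.rank_zhat]
  · -- zhat_unique
    rintro ⟨p1, p2⟩ hp
    simp only [UDData.prod, Set.mem_setOf_eq] at hp ⊢
    have h1 : C.rank p1 = 0 := by omega
    have h2 : D.rank p2 = 0 := by omega
    exact Prod.ext (hC.zhat_unique p1 h1) (hD.zhat_unique p2 h2)
  · -- from_zhat
    rintro ⟨p1, p2⟩
    obtain ⟨f1⟩ := hC.from_zhat p1
    obtain ⟨f2⟩ := hD.from_zhat p2
    exact ⟨⟨f1, f2⟩⟩
  · -- hom_rank
    rintro ⟨p1, p2⟩ ⟨q1, q2⟩ ⟨f1, f2⟩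
    have h1 := hC.hom_rank p1 q1 ⟨f1⟩
    have h2 := hD.hom_rank p2 q2 ⟨f2⟩
    show C.rank p1 + D.rank p2 < C.rank q1 + D.rank q2 ∨ _
    rcases h1 with h1 | rfl
    · left
      rcases h2 with h2 | rfl
      · omega
      · omega
    · rcases h2 with h2 | rfl
      · left; omega
      · right; rfl
  · -- aut_inv
    rintro ⟨p1, p2⟩ ⟨f1, f2⟩
    obtain ⟨g1, hg1, hg1'⟩ := hC.aut_inv p1 f1
    obtain ⟨g2, hg2, hg2'⟩ := hD.aut_inv p2 f2
    exact ⟨⟨g1, g2⟩, by simp [UDData.prod, hg1, hg2], by simp [UDData.prod, hg1', hg2']⟩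
  · -- factor
    rintro ⟨p1, p2⟩ ⟨q1, q2⟩ ⟨f1, f2⟩ hr
    dsimp only at f1 f2
    have hr' : C.rank p1 + D.rank p2 < C.rank q1 + D.rank q2 := hr
    have h1 := hC.hom_rank p1 q1 ⟨f1⟩
    have h2 := hD.hom_rank p2 q2 ⟨f2⟩
    by_cases hlt : C.rank p1 < C.rank q1
    · obtain ⟨r1, g1, h1', hr1, hc1⟩ := hC.factor f1 hlt
      exact ⟨(r1, p2), ⟨g1, D.idm p2⟩, ⟨h1', f2⟩,
        by show C.rank r1 + D.rank p2 = C.rank p1 + D.rank p2 + 1; omega,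
        by simp [UDData.prod, hc1, D.idm_comp]⟩
    · have hlt2 : D.rank p2 < D.rank q2 := by
        rcases h1 with h1 | rfl
        · omega
        · rcases h2 with h2 | rfl
          · exact h2
          · omega
      obtain ⟨r2, g2, h2', hr2, hc2⟩ := hD.factor f2 hlt2
      exact ⟨(p1, r2), ⟨C.idm p1, g2⟩, ⟨f1, h2'⟩,
        by show C.rank p1 + D.rank r2 = C.rank p1 + D.rank p2 + 1; omega,
        by simp [UDData.prod, hc2, C.idm_comp]⟩
  · -- pre_free
    rintro ⟨p1, p2⟩ ⟨q1, q2⟩ hr ⟨a1, a2⟩ ⟨f1, f2⟩ hcomp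
    simp only [UDData.prod] at hr
    simp only [UDData.prod, Prod.mk.injEq] at hcomp
    obtain ⟨hc1, hc2⟩ := hcomp
    have h1 := hC.hom_rank p1 q1 ⟨f1⟩
    have h2 := hD.hom_rank p2 q2 ⟨f2⟩
    show (_, _) = (_, _)
    rcases h1 with h1 | rfl
    · rcases h2 with h2 | rfl
      · omega
      · have : C.rank q1 = C.rank p1 + 1 := by omega
        exact Prod.ext (hC.pre_free this a1 f1 hc1) (D.aut_left_cancel hD a2 f2 hc2)
    · rcases h2 with h2 | rfl
      · have : D.rank q2 = D.rank p2 + 1 := by omega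
        exact Prod.ext (C.aut_left_cancel hC a1 f1 hc1) (hD.pre_free this a2 f2 hc2)
      · omega
  · -- post_free
    rintro ⟨p1, p2⟩ ⟨q1, q2⟩ hr ⟨b1, b2⟩ ⟨f1, f2⟩ hcomp
    simp only [UDData.prod] at hr
    simp only [UDData.prod, Prod.mk.injEq] at hcomp
    obtain ⟨hc1, hc2⟩ := hcomp
    have h1 := hC.hom_rank p1 q1 ⟨f1⟩
    have h2 := hD.hom_rank p2 q2 ⟨f2⟩
    show (_, _) = (_, _)
    rcases h1 with h1 | rfl
    · rcases h2 with h2 | rfl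
      · omega
      · have : C.rank q1 = C.rank p1 + 1 := by omega
        exact Prod.ext (hC.post_free this b1 f1 hc1) (D.aut_right_cancel hD b2 f2 hc2)
    · rcases h2 with h2 | rfl
      · have : D.rank q2 = D.rank p2 + 1 := by omega
        exact Prod.ext (C.aut_right_cancel hC b1 f1 hc1) (hD.post_free this b2 f2 hc2)
      · omega
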